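/- Let x > 1 be an integer. Then there exists an additive subgroup G of ℝ with {r ∈ ℝ \ {0} : r·G = G} = {±xᵐ : m ∈ ℤ} if and only if x is prime. Moreover, when x is prime, G = {z·xᵐ : z ∈ ℤ, m ∈ ℤ} (the subgroup generated by all integer multiples of integer powers of x) works. -/

import Mathlib

open Pointwise


lemma memA (x : ℤ) (hx : 1 < x) (y : ℝ) :
    y ∈ AddSubgroup.closure {y : ℝ | ∃ m : ℤ, y = (x : ℝ) ^ m} ↔
      ∃ z m : ℤ, y = (z : ℝ) * (x : ℝ) ^ m := by
  have hx0 : (x : ℝ) ≠ 0 := by positivity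
  constructor
  · intro hy
    induction hy using AddSubgroup.closure_induction with
    | mem y hy => obtain ⟨m, rfl⟩ := hy; exact ⟨1, m, by push_cast; ring⟩
    | zero => exact ⟨0, 0, by simp⟩
    | add a b _ _ ha hb =>
      obtain ⟨z1, m1, rfl⟩ := ha
      obtain ⟨z2, m2, rfl⟩ := hb
      have key : ∀ z1 z2 m1 m2 : ℤ, m1 ≤ m2 →
          ∃ z m : ℤ, (z1 : ℝ) * (x:ℝ) ^ m1 + (z2:ℝ) * (x:ℝ) ^ m2 = (z:ℝ) * (x:ℝ) ^ m := by
        intro z1 z2 m1 m2 h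
        refine ⟨z1 + z2 * x ^ (m2 - m1).toNat, m1, ?_⟩
        have h2 : (x:ℝ) ^ m2 = (x:ℝ) ^ ((m2 - m1).toNat : ℤ) * (x:ℝ) ^ m1 := by
          rw [← zpow_add₀ hx0]; congr 1; omega
        rw [h2]
        push_cast [zpow_natCast]
        ring
      rcases le_total m1 m2 with h | h
      · exact key z1 z2 m1 m2 h
      · obtain ⟨z, m, hzm⟩ := key z2 z1 m2 m1 h
        exact ⟨z, m, by rw [add_comm]; exact hzm⟩
    | neg a _ ha =>
      obtain ⟨z, m, rfl⟩ := ha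
      exact ⟨-z, m, by push_cast; ring⟩
  · rintro ⟨z, m, rfl⟩
    have h1 : (x:ℝ) ^ m ∈ AddSubgroup.closure {y : ℝ | ∃ m : ℤ, y = (x : ℝ) ^ m} :=
      AddSubgroup.subset_closure ⟨m, rfl⟩
    simpa [zsmul_eq_mul] using AddSubgroup.zsmul_mem _ h1 z

lemma smul_closure_eq (x : ℤ) (hx : 1 < x) (ε : ℝ) (hε : ε = 1 ∨ ε = -1) (m : ℤ) :
    (ε * (x : ℝ) ^ m) • ((AddSubgroup.closure {y : ℝ | ∃ m : ℤ, y = (x : ℝ) ^ m} :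
        AddSubgroup ℝ) : Set ℝ) =
      ((AddSubgroup.closure {y : ℝ | ∃ m : ℤ, y = (x : ℝ) ^ m} : AddSubgroup ℝ) : Set ℝ) := by
  have hx0 : (x : ℝ) ≠ 0 := by positivity
  have hε2 : ε * ε = 1 := by rcases hε with rfl | rfl <;> norm_num
  have hεz : ∀ z : ℤ, ∃ z' : ℤ, (z' : ℝ) = ε * z := by
    intro z; rcases hε with rfl | rfl
    · exact ⟨z, by norm_num⟩
    · exact ⟨-z, by push_cast; ring⟩
  ext y
  simp only [Set.mem_smul_set, SetLike.mem_coe]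
  constructor
  · rintro ⟨g, hg, rfl⟩
    obtain ⟨z, k, rfl⟩ := (memA x hx _).mp hg
    obtain ⟨z', hz'⟩ := hεz z
    refine (memA x hx _).mpr ⟨z', m + k, ?_⟩
    rw [zpow_add₀ hx0, hz', smul_eq_mul]; ring
  · intro hy
    obtain ⟨z, k, rfl⟩ := (memA x hx _).mp hy
    obtain ⟨z', hz'⟩ := hεz z
    refine ⟨(z' : ℝ) * (x:ℝ) ^ (k - m), (memA x hx _).mpr ⟨z', k - m, rfl⟩, ?_⟩
    have hxx : (x:ℝ) ^ m * (x:ℝ) ^ (k - m) = (x:ℝ) ^ k := by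
      rw [← zpow_add₀ hx0]; congr 1; ring
    rw [smul_eq_mul, hz']
    calc ε * (x:ℝ)^m * (ε * z * (x:ℝ)^(k-m)) = (ε*ε) * z * ((x:ℝ)^m * (x:ℝ)^(k-m)) := by ring
    _ = z * (x:ℝ)^k := by rw [hε2, hxx]; ring

lemma prime_case (x : ℤ) (hx : 1 < x) (hp : Prime x) :
    {r : ℝ | r ≠ 0 ∧
        r • ((AddSubgroup.closure {y : ℝ | ∃ m : ℤ, y = (x : ℝ) ^ m} :
            AddSubgroup ℝ) : Set ℝ) =
          ((AddSubgroup.closure {y : ℝ | ∃ m : ℤ, y = (x : ℝ) ^ m} :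
            AddSubgroup ℝ) : Set ℝ)} =
      {r : ℝ | ∃ m : ℤ, r = (x : ℝ) ^ m ∨ r = -((x : ℝ) ^ m)} := by
  have hx0 : (x : ℝ) ≠ 0 := by positivity
  have hx1 : (1:ℝ) < (x:ℝ) := by exact_mod_cast hx
  ext r
  simp only [Set.mem_setOf_eq]
  constructor
  · rintro ⟨hr0, hrG⟩
    -- r ∈ G
    have h1G : (1:ℝ) ∈ AddSubgroup.closure {y : ℝ | ∃ m : ℤ, y = (x : ℝ) ^ m} :=
      (memA x hx _).mpr ⟨1, 0, by simp⟩
    have hrmem : r ∈ (AddSubgroup.closure {y : ℝ | ∃ m : ℤ, y = (x : ℝ) ^ m} : AddSubgroup ℝ) := by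
      have : r ∈ r • ((AddSubgroup.closure {y : ℝ | ∃ m : ℤ, y = (x : ℝ) ^ m} :
          AddSubgroup ℝ) : Set ℝ) := Set.mem_smul_set.2 ⟨1, h1G, by simp⟩
      rw [hrG] at this; exact this
    have hone : (1:ℝ) ∈ r • ((AddSubgroup.closure {y : ℝ | ∃ m : ℤ, y = (x : ℝ) ^ m} :
        AddSubgroup ℝ) : Set ℝ) := by rw [hrG]; exact h1G
    obtain ⟨g, hg, hgr⟩ := Set.mem_smul_set.1 hone
    rw [smul_eq_mul] at hgr
    obtain ⟨z, m, hzm⟩ := (memA x hx _).mp hrmem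
    obtain ⟨w, k, hwk⟩ := (memA x hx _).mp hg
    have hz0 : z ≠ 0 := by rintro rfl; apply hr0; simpa using hzm
    have key : (z:ℝ) * (w:ℝ) * (x:ℝ) ^ (m + k) = 1 := by
      rw [hzm, hwk] at hgr
      rw [zpow_add₀ hx0]
      linear_combination hgr
    rcases le_or_gt 0 (m + k) with h | h
    · -- z is a unit
      have ht : (((m+k).toNat : ℕ) : ℤ) = m + k := Int.toNat_of_nonneg h
      have hzint : z * w * x ^ (m+k).toNat = 1 := by
        have h2 : ((z * w * x ^ (m+k).toNat : ℤ):ℝ) = ((1:ℤ):ℝ) := by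
          push_cast
          rw [← zpow_natCast (x:ℝ), ht]
          linear_combination key
        exact_mod_cast h2
      have hzu : IsUnit z := IsUnit.of_mul_eq_one (a := z) (w * x ^ (m+k).toNat)
        (by linear_combination hzint)
      rcases Int.isUnit_iff.mp hzu with rfl | rfl
      · exact ⟨m, Or.inl (by rw [hzm]; push_cast; ring)⟩
      · exact ⟨m, Or.inr (by rw [hzm]; push_cast; ring)⟩
    · -- z*w = x^s with s>0
      set s : ℕ := (-(m+k)).toNat with hs
      have hzw : z * w = x ^ s := by
        have h2 : ((z*w : ℤ):ℝ) = ((x ^ s : ℤ) : ℝ) := by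
          push_cast
          rw [← zpow_natCast (x:ℝ), show ((s:ℕ):ℤ) = -(m+k) from by omega, zpow_neg]
          exact eq_inv_of_mul_eq_one_left key
        exact_mod_cast h2
      have hdvd : z.natAbs ∣ x.natAbs ^ s := by
        have : z ∣ x ^ s := ⟨w, hzw.symm⟩
        simpa [Int.natAbs_pow] using Int.natAbs_dvd_natAbs.mpr this
      obtain ⟨i, _, hi⟩ := (Nat.dvd_prime_pow (Int.prime_iff_natAbs_prime.mp hp)).mp hdvd
      have hzi : z = x ^ i ∨ z = -(x ^ i) := by
        have hxabs : (x.natAbs : ℤ) = x := Int.natAbs_of_nonneg (by omega)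
        rcases Int.natAbs_eq z with hz | hz
        · left; rw [hz, hi, Nat.cast_pow, hxabs]
        · right; rw [hz, hi, Nat.cast_pow, hxabs]
      have hpow : ((x:ℝ) ^ i) * (x:ℝ) ^ m = (x:ℝ) ^ ((i:ℤ) + m) := by
        rw [zpow_add₀ hx0, zpow_natCast]
      rcases hzi with rfl | rfl
      · refine ⟨(i:ℤ) + m, Or.inl ?_⟩
        rw [hzm, ← hpow]; push_cast; ring
      · refine ⟨(i:ℤ) + m, Or.inr ?_⟩
        rw [hzm, ← hpow]; push_cast; ring
  · rintro ⟨m, rfl | rfl⟩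
    · refine ⟨by positivity, ?_⟩
      simpa using smul_closure_eq x hx 1 (Or.inl rfl) m
    · have hpos : (0:ℝ) < (x:ℝ) ^ m := by positivity
      refine ⟨by linarith, ?_⟩
      have := smul_closure_eq x hx (-1) (Or.inr rfl) m
      simpa [neg_one_mul] using this

lemma fwd (x : ℤ) (hx : 1 < x)
    (h : ∃ G : AddSubgroup ℝ,
        {r : ℝ | r ≠ 0 ∧ r • (G : Set ℝ) = (G : Set ℝ)} =
          {r : ℝ | ∃ m : ℤ, r = (x : ℝ) ^ m ∨ r = -((x : ℝ) ^ m)}) : Prime x := by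
  obtain ⟨G, hG⟩ := h
  by_contra hnp
  have hxu : ¬IsUnit x := by rw [Int.isUnit_iff]; omega
  have hirr : ¬Irreducible x := fun hi => hnp hi.prime
  rw [irreducible_iff] at hirr
  push_neg at hirr
  obtain ⟨a, b, hab, hau, hbu⟩ := hirr hxu
  -- pass to absolute values
  have hab' : |a| * |b| = x := by rw [← abs_mul, ← hab]; exact abs_of_pos (by omega)
  have ha0 : a ≠ 0 := by rintro rfl; omega
  have hb0 : b ≠ 0 := by rintro rfl; omega
  have ha2 : 2 ≤ |a| := by
    rcases Int.isUnit_iff.not.mp hau with h'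
    have := abs_pos.mpr ha0
    rcases abs_cases a with ⟨h1, _⟩ | ⟨h1, _⟩ <;> omega
  have hb2 : 2 ≤ |b| := by
    have := abs_pos.mpr hb0
    rcases Int.isUnit_iff.not.mp hbu with h'
    rcases abs_cases b with ⟨h1, _⟩ | ⟨h1, _⟩ <;> omega
  have halt : |a| < x := by nlinarith
  -- x stabilizes G
  have hxS : (x:ℝ) ∈ {r : ℝ | r ≠ 0 ∧ r • (G : Set ℝ) = (G : Set ℝ)} := by
    rw [hG]; exact ⟨1, Or.inl (zpow_one _).symm⟩
  obtain ⟨-, hxG⟩ := hxS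
  -- |a| stabilizes G
  have haS : ((|a| : ℤ) : ℝ) ∈ {r : ℝ | r ≠ 0 ∧ r • (G : Set ℝ) = (G : Set ℝ)} := by
    refine ⟨by exact_mod_cast (by omega : (|a|:ℤ) ≠ 0), ?_⟩
    apply Set.Subset.antisymm
    · rintro y ⟨g, hg, rfl⟩
      have := AddSubgroup.zsmul_mem G hg |a|
      simpa [zsmul_eq_mul] using this
    · intro g hg
      have hg' : g ∈ (x:ℝ) • (G : Set ℝ) := by rw [hxG]; exact hg
      obtain ⟨h, hh, rfl⟩ := Set.mem_smul_set.1 hg'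
      refine Set.mem_smul_set.2 ⟨((|b| : ℤ) : ℝ) * h, ?_, ?_⟩
      · have := AddSubgroup.zsmul_mem G hh |b|
        simpa [zsmul_eq_mul] using this
      · rw [smul_eq_mul, smul_eq_mul, ← mul_assoc, ← Int.cast_mul, hab']
  rw [hG] at haS
  obtain ⟨m, hm | hm⟩ := haS
  · -- |a| = x^m with 1 < |a| < x : impossible
    have hx1 : (1:ℝ) < (x:ℝ) := by exact_mod_cast hx
    have h1 : (x:ℝ) ^ (0:ℤ) < (x:ℝ) ^ m := by
      rw [zpow_zero, ← hm]; exact_mod_cast (by omega : (1:ℤ) < |a|)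
    have h2 : (x:ℝ) ^ m < (x:ℝ) ^ (1:ℤ) := by
      rw [zpow_one, ← hm]; exact_mod_cast halt
    have := (zpow_lt_zpow_iff_right₀ hx1).mp h1
    have := (zpow_lt_zpow_iff_right₀ hx1).mp h2
    omega
  · have hpos : (0:ℝ) < (x:ℝ) ^ m := by positivity
    have : (0:ℝ) < ((|a| : ℤ) : ℝ) := by exact_mod_cast (by omega : (0:ℤ) < |a|)
    linarith [hm ▸ this]

theorem stmt_16 (x : ℤ) (hx : 1 < x) :
    ((∃ G : AddSubgroup ℝ,
        {r : ℝ | r ≠ 0 ∧ r • (G : Set ℝ) = (G : Set ℝ)} =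
          {r : ℝ | ∃ m : ℤ, r = (x : ℝ) ^ m ∨ r = -((x : ℝ) ^ m)}) ↔ Prime x) ∧
      (Prime x →
        {r : ℝ | r ≠ 0 ∧
            r • ((AddSubgroup.closure {y : ℝ | ∃ m : ℤ, y = (x : ℝ) ^ m} :
                AddSubgroup ℝ) : Set ℝ) =
              ((AddSubgroup.closure {y : ℝ | ∃ m : ℤ, y = (x : ℝ) ^ m} :
                AddSubgroup ℝ) : Set ℝ)} =
          {r : ℝ | ∃ m : ℤ, r = (x : ℝ) ^ m ∨ r = -((x : ℝ) ^ m)}) := by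
  refine ⟨⟨fwd x hx, fun hp => ⟨_, prime_case x hx hp⟩⟩, fun hp => prime_case x hx hp⟩
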